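/- Let A, C, σ, Ra be strictly positive real parameters. If g ∈ ℝ[x,y,z] is a polynomial such that X(g) has degree at most 1, then g has degree at most 2. -/

import Mathlib

open MvPolynomial

/-- The derivation associated with the Glukhovsky–Dolzhansky system
`ẋ = A y z + C z − σ x, ẏ = −x z + Ra − y, ż = −z + x y`,
acting on `ℝ[x,y,z]` (variables `X 0 = x`, `X 1 = y`, `X 2 = z`). -/
noncomputable def gdDeriv (A C σ Ra : ℝ) (f : MvPolynomial (Fin 3) ℝ) :
    MvPolynomial (Fin 3) ℝ :=
  (MvPolynomial.C A * X 1 * X 2 + MvPolynomial.C C * X 2 - MvPolynomial.C σ * X 0) *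
      pderiv (0 : Fin 3) f
    + (-(X 0 * X 2) + MvPolynomial.C Ra - X 1) * pderiv (1 : Fin 3) f
    + (-X 2 + X 0 * X 1) * pderiv (2 : Fin 3) f

namespace GDaux

theorem coeff_pderiv' (i : Fin 3) (f : MvPolynomial (Fin 3) ℝ) (m : Fin 3 →₀ ℕ) :
    coeff m (pderiv i f) = (m i + 1) * coeff (m + Finsupp.single i 1) f := by
  induction f using MvPolynomial.induction_on' with
  | monomial s a =>
    rw [pderiv_monomial, coeff_monomial, coeff_monomial]
    by_cases h : s i = 0
    · have h1 : s - Finsupp.single i 1 = s := by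
        ext j
        by_cases hj : j = i
        · subst hj; simp [h]
        · simp [Finsupp.single_apply, Ne.symm hj, hj]
      have h3 : ¬ s = m + Finsupp.single i 1 := by
        intro he
        have : s i = m i + 1 := by rw [he]; simp
        omega
      rw [h1, h, if_neg h3]
      split_ifs with h2
      · simp
      · ring
    · have h1 : s - Finsupp.single i 1 = m ↔ s = m + Finsupp.single i 1 := by
        constructor
        · intro he
          ext j
          have hej := DFunLike.congr_fun he j
          by_cases hj : j = i
          · subst hj
            simp [Finsupp.tsub_apply, Finsupp.single_apply] at hej ⊢
            omega
          · have hij : ¬ i = j := fun hh => hj hh.symm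
            simp [Finsupp.tsub_apply, Finsupp.single_apply, hij] at hej ⊢
            omega
        · intro he; subst he
          ext j
          by_cases hj : j = i
          · subst hj; simp
          · have hij : ¬ i = j := fun hh => hj hh.symm
            simp [Finsupp.single_apply, hij]
      by_cases h2 : s - Finsupp.single i 1 = m
      · have h3 := h1.mp h2
        have h4 : s i = m i + 1 := by rw [h3]; simp
        rw [if_pos h2, if_pos h3, h4]; push_cast; ring
      · rw [if_neg h2, if_neg (fun hh => h2 (h1.mpr hh))]; ring
  | add p q hp hq => simp only [map_add, coeff_add, hp, hq]; ring

noncomputable def mono3 (a b c : ℕ) : Fin 3 →₀ ℕ :=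
  Finsupp.single 0 a + Finsupp.single 1 b + Finsupp.single 2 c

lemma mono3_apply0 (a b c : ℕ) : mono3 a b c 0 = a := by
  simp [mono3, Finsupp.single_apply]
lemma mono3_apply1 (a b c : ℕ) : mono3 a b c 1 = b := by
  simp [mono3, Finsupp.single_apply]
lemma mono3_apply2 (a b c : ℕ) : mono3 a b c 2 = c := by
  simp [mono3, Finsupp.single_apply]

lemma mono3_apply (a b c : ℕ) (j : Fin 3) :
    mono3 a b c j = if j = 0 then a else if j = 1 then b else c := by
  fin_cases j
  · simpa using mono3_apply0 a b c
  · simpa using mono3_apply1 a b c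
  · simpa using mono3_apply2 a b c

lemma mono3_le (x y z a b c : ℕ) :
    mono3 x y z ≤ mono3 a b c ↔ x ≤ a ∧ y ≤ b ∧ z ≤ c := by
  rw [Finsupp.le_def]
  constructor
  · intro h
    refine ⟨?_, ?_, ?_⟩
    · have := h 0; rwa [mono3_apply0, mono3_apply0] at this
    · have := h 1; rwa [mono3_apply1, mono3_apply1] at this
    · have := h 2; rwa [mono3_apply2, mono3_apply2] at this
  · rintro ⟨h1, h2, h3⟩ j
    rw [mono3_apply, mono3_apply]
    split_ifs <;> assumption

lemma mono3_sub (x y z a b c : ℕ) :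
    mono3 a b c - mono3 x y z = mono3 (a - x) (b - y) (c - z) := by
  ext j
  rw [Finsupp.tsub_apply, mono3_apply, mono3_apply, mono3_apply]
  split_ifs <;> rfl

lemma mono3_add (x y z a b c : ℕ) :
    mono3 a b c + mono3 x y z = mono3 (a + x) (b + y) (c + z) := by
  ext j
  rw [Finsupp.add_apply, mono3_apply, mono3_apply, mono3_apply]
  split_ifs <;> rfl

lemma single0_eq : Finsupp.single (0 : Fin 3) 1 = mono3 1 0 0 := by
  ext j; fin_cases j <;> simp [mono3_apply, Finsupp.single_apply]
lemma single1_eq : Finsupp.single (1 : Fin 3) 1 = mono3 0 1 0 := by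
  ext j; fin_cases j <;> simp [mono3_apply, Finsupp.single_apply]
lemma single2_eq : Finsupp.single (2 : Fin 3) 1 = mono3 0 0 1 := by
  ext j; fin_cases j <;> simp [mono3_apply, Finsupp.single_apply]
lemma zero_eq_mono3 : (0 : Fin 3 →₀ ℕ) = mono3 0 0 0 := by
  ext j; fin_cases j <;> simp [mono3_apply]

lemma gd_expand (A C σ Ra : ℝ) (g : MvPolynomial (Fin 3) ℝ) :
  gdDeriv A C σ Ra g =
    monomial (mono3 0 1 1) A * pderiv 0 g + monomial (mono3 0 0 1) C * pderiv 0 g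
    + monomial (mono3 1 0 0) (-σ) * pderiv 0 g
    + monomial (mono3 1 0 1) (-1) * pderiv 1 g + monomial (mono3 0 0 0) Ra * pderiv 1 g
    + monomial (mono3 0 1 0) (-1) * pderiv 1 g
    + monomial (mono3 0 0 1) (-1) * pderiv 2 g + monomial (mono3 1 1 0) 1 * pderiv 2 g := by
  have hX : ∀ (i : Fin 3), (X i : MvPolynomial (Fin 3) ℝ) = monomial (Finsupp.single i 1) 1 :=
    fun i => rfl
  rw [gdDeriv]
  rw [hX 0, hX 1, hX 2, C_apply, C_apply, C_apply, C_apply]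
  rw [single0_eq, single1_eq, single2_eq, zero_eq_mono3]
  simp only [monomial_mul]
  rw [show mono3 0 0 0 + mono3 0 1 0 + mono3 0 0 1 = mono3 0 1 1 by
        rw [mono3_add, mono3_add],
      show mono3 0 0 0 + mono3 0 0 1 = mono3 0 0 1 by rw [mono3_add],
      show mono3 0 0 0 + mono3 1 0 0 = mono3 1 0 0 by rw [mono3_add],
      show mono3 1 0 0 + mono3 0 0 1 = mono3 1 0 1 by rw [mono3_add],
      show mono3 1 0 0 + mono3 0 1 0 = mono3 1 1 0 by rw [mono3_add]]
  simp only [map_neg]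
  ring

/-- coefficient function with integer indices, zero outside `ℕ³`. -/
noncomputable def cf (g : MvPolynomial (Fin 3) ℝ) (a b c : ℤ) : ℝ :=
  if 0 ≤ a ∧ 0 ≤ b ∧ 0 ≤ c then coeff (mono3 a.toNat b.toNat c.toNat) g else 0

lemma cf_natcast (g : MvPolynomial (Fin 3) ℝ) (a b c : ℕ) :
    cf g a b c = coeff (mono3 a b c) g := by
  simp [cf]

lemma cf_neg (g : MvPolynomial (Fin 3) ℝ) {a b c : ℤ} (h : a < 0 ∨ b < 0 ∨ c < 0) :
    cf g a b c = 0 := by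
  rw [cf, if_neg]; omega

lemma coeff_mono_pd (r : ℝ) (x y z : ℕ) (i : Fin 3) (g : MvPolynomial (Fin 3) ℝ) (a b c : ℕ) :
    coeff (mono3 a b c) (monomial (mono3 x y z) r * pderiv i g)
    = if x ≤ a ∧ y ≤ b ∧ z ≤ c then
        r * ((mono3 (a-x) (b-y) (c-z) i : ℝ) + 1)
          * coeff (mono3 (a-x) (b-y) (c-z) + Finsupp.single i 1) g
      else 0 := by
  rw [coeff_monomial_mul']
  by_cases h : x ≤ a ∧ y ≤ b ∧ z ≤ c
  · rw [if_pos ((mono3_le x y z a b c).mpr h), if_pos h, mono3_sub, coeff_pderiv']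
    push_cast; ring
  · rw [if_neg (fun hh => h ((mono3_le x y z a b c).mp hh)), if_neg h]

end GDaux
namespace GDaux
variable (g : MvPolynomial (Fin 3) ℝ)

lemma term1 (r : ℝ) (a b c : ℕ) :
    coeff (mono3 a b c) (monomial (mono3 0 1 1) r * pderiv 0 g)
    = r * ((a:ℝ)+1) * cf g ((a:ℤ)+1) ((b:ℤ)-1) ((c:ℤ)-1) := by
  rw [coeff_mono_pd]
  by_cases hbc : 1 ≤ b ∧ 1 ≤ c
  · rw [if_pos ⟨Nat.zero_le _, hbc.1, hbc.2⟩, single0_eq, mono3_add, mono3_apply0]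
    have e1 : ((a:ℤ)+1) = ((a+1:ℕ):ℤ) := by push_cast; ring
    have e2 : ((b:ℤ)-1) = ((b-1:ℕ):ℤ) := by omega
    have e3 : ((c:ℤ)-1) = ((c-1:ℕ):ℤ) := by omega
    rw [e1, e2, e3, cf_natcast]
    have e4 : a - 0 + 1 = a + 1 := by omega
    have e5 : b - 1 + 0 = b - 1 := by omega
    have e6 : c - 1 + 0 = c - 1 := by omega
    rw [e4, e5, e6]
    have e7 : ((a - 0 : ℕ) : ℝ) = (a:ℝ) := by norm_num
    rw [e7]
  · rw [if_neg (by tauto), cf_neg g (by omega), mul_zero]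
end GDaux
namespace GDaux
variable (g : MvPolynomial (Fin 3) ℝ)

lemma term2 (r : ℝ) (a b c : ℕ) :
    coeff (mono3 a b c) (monomial (mono3 0 0 1) r * pderiv 0 g)
    = r * ((a:ℝ)+1) * cf g ((a:ℤ)+1) (b:ℤ) ((c:ℤ)-1) := by
  rw [coeff_mono_pd]
  by_cases hc : 1 ≤ c
  · rw [if_pos ⟨Nat.zero_le _, Nat.zero_le _, hc⟩, single0_eq, mono3_add, mono3_apply0]
    have e1 : ((a:ℤ)+1) = ((a+1:ℕ):ℤ) := by push_cast; ring
    have e2 : ((b:ℤ)) = ((b:ℕ):ℤ) := rfl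
    have e3 : ((c:ℤ)-1) = ((c-1:ℕ):ℤ) := by omega
    rw [e1, e3, cf_natcast]
    have e4 : a - 0 + 1 = a + 1 := by omega
    have e5 : b - 0 + 0 = b := by omega
    have e6 : c - 1 + 0 = c - 1 := by omega
    rw [e4, e5, e6]
    have e7 : ((a - 0 : ℕ) : ℝ) = (a:ℝ) := by norm_num
    rw [e7]
  · rw [if_neg (by tauto), cf_neg g (by omega), mul_zero]

lemma term3 (r : ℝ) (a b c : ℕ) :
    coeff (mono3 a b c) (monomial (mono3 1 0 0) r * pderiv 0 g)
    = r * (a:ℝ) * cf g (a:ℤ) (b:ℤ) (c:ℤ) := by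
  rw [coeff_mono_pd]
  by_cases ha : 1 ≤ a
  · rw [if_pos ⟨ha, Nat.zero_le _, Nat.zero_le _⟩, single0_eq, mono3_add, mono3_apply0]
    have e4 : a - 1 + 1 = a := by omega
    have e5 : b - 0 + 0 = b := by omega
    have e6 : c - 0 + 0 = c := by omega
    rw [e4, e5, e6, cf_natcast]
    have e7 : ((a - 1 : ℕ) : ℝ) + 1 = (a:ℝ) := by
      push_cast [Nat.cast_sub ha]; ring
    rw [e7]
  · rw [if_neg (by tauto)]
    have : a = 0 := by omega
    subst this
    norm_num

lemma term4 (r : ℝ) (a b c : ℕ) :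
    coeff (mono3 a b c) (monomial (mono3 1 0 1) r * pderiv 1 g)
    = r * ((b:ℝ)+1) * cf g ((a:ℤ)-1) ((b:ℤ)+1) ((c:ℤ)-1) := by
  rw [coeff_mono_pd]
  by_cases hac : 1 ≤ a ∧ 1 ≤ c
  · rw [if_pos ⟨hac.1, Nat.zero_le _, hac.2⟩, single1_eq, mono3_add, mono3_apply1]
    have e1 : ((a:ℤ)-1) = ((a-1:ℕ):ℤ) := by omega
    have e2 : ((b:ℤ)+1) = ((b+1:ℕ):ℤ) := by push_cast; ring
    have e3 : ((c:ℤ)-1) = ((c-1:ℕ):ℤ) := by omega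
    rw [e1, e2, e3, cf_natcast]
    have e4 : a - 1 + 0 = a - 1 := by omega
    have e5 : b - 0 + 1 = b + 1 := by omega
    have e6 : c - 1 + 0 = c - 1 := by omega
    rw [e4, e5, e6]
    have e7 : ((b - 0 : ℕ) : ℝ) = (b:ℝ) := by norm_num
    rw [e7]
  · rw [if_neg (by tauto), cf_neg g (by omega), mul_zero]

lemma term5 (r : ℝ) (a b c : ℕ) :
    coeff (mono3 a b c) (monomial (mono3 0 0 0) r * pderiv 1 g)
    = r * ((b:ℝ)+1) * cf g (a:ℤ) ((b:ℤ)+1) (c:ℤ) := by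
  rw [coeff_mono_pd]
  rw [if_pos ⟨Nat.zero_le _, Nat.zero_le _, Nat.zero_le _⟩, single1_eq, mono3_add, mono3_apply1]
  have e2 : ((b:ℤ)+1) = ((b+1:ℕ):ℤ) := by push_cast; ring
  rw [e2, cf_natcast]
  have e4 : a - 0 + 0 = a := by omega
  have e5 : b - 0 + 1 = b + 1 := by omega
  have e6 : c - 0 + 0 = c := by omega
  rw [e4, e5, e6]
  have e7 : ((b - 0 : ℕ) : ℝ) = (b:ℝ) := by norm_num
  rw [e7]

lemma term6 (r : ℝ) (a b c : ℕ) :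
    coeff (mono3 a b c) (monomial (mono3 0 1 0) r * pderiv 1 g)
    = r * (b:ℝ) * cf g (a:ℤ) (b:ℤ) (c:ℤ) := by
  rw [coeff_mono_pd]
  by_cases hb : 1 ≤ b
  · rw [if_pos ⟨Nat.zero_le _, hb, Nat.zero_le _⟩, single1_eq, mono3_add, mono3_apply1]
    have e4 : a - 0 + 0 = a := by omega
    have e5 : b - 1 + 1 = b := by omega
    have e6 : c - 0 + 0 = c := by omega
    rw [e4, e5, e6, cf_natcast]
    have e7 : ((b - 1 : ℕ) : ℝ) + 1 = (b:ℝ) := by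
      push_cast [Nat.cast_sub hb]; ring
    rw [e7]
  · rw [if_neg (by tauto)]
    have : b = 0 := by omega
    subst this
    norm_num

lemma term7 (r : ℝ) (a b c : ℕ) :
    coeff (mono3 a b c) (monomial (mono3 0 0 1) r * pderiv 2 g)
    = r * (c:ℝ) * cf g (a:ℤ) (b:ℤ) (c:ℤ) := by
  rw [coeff_mono_pd]
  by_cases hc : 1 ≤ c
  · rw [if_pos ⟨Nat.zero_le _, Nat.zero_le _, hc⟩, single2_eq, mono3_add, mono3_apply2]
    have e4 : a - 0 + 0 = a := by omega
    have e5 : b - 0 + 0 = b := by omega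
    have e6 : c - 1 + 1 = c := by omega
    rw [e4, e5, e6, cf_natcast]
    have e7 : ((c - 1 : ℕ) : ℝ) + 1 = (c:ℝ) := by
      push_cast [Nat.cast_sub hc]; ring
    rw [e7]
  · rw [if_neg (by tauto)]
    have : c = 0 := by omega
    subst this
    norm_num

lemma term8 (r : ℝ) (a b c : ℕ) :
    coeff (mono3 a b c) (monomial (mono3 1 1 0) r * pderiv 2 g)
    = r * ((c:ℝ)+1) * cf g ((a:ℤ)-1) ((b:ℤ)-1) ((c:ℤ)+1) := by
  rw [coeff_mono_pd]
  by_cases hab : 1 ≤ a ∧ 1 ≤ b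
  · rw [if_pos ⟨hab.1, hab.2, Nat.zero_le _⟩, single2_eq, mono3_add, mono3_apply2]
    have e1 : ((a:ℤ)-1) = ((a-1:ℕ):ℤ) := by omega
    have e2 : ((b:ℤ)-1) = ((b-1:ℕ):ℤ) := by omega
    have e3 : ((c:ℤ)+1) = ((c+1:ℕ):ℤ) := by push_cast; ring
    rw [e1, e2, e3, cf_natcast]
    have e4 : a - 1 + 0 = a - 1 := by omega
    have e5 : b - 1 + 0 = b - 1 := by omega
    have e6 : c - 0 + 1 = c + 1 := by omega
    rw [e4, e5, e6]
    have e7 : ((c - 0 : ℕ) : ℝ) = (c:ℝ) := by norm_num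
    rw [e7]
  · rw [if_neg (by tauto), cf_neg g (by omega), mul_zero]

theorem master (A C σ Ra : ℝ) (a b c : ℕ) :
    coeff (mono3 a b c) (gdDeriv A C σ Ra g)
    = A * ((a:ℝ)+1) * cf g ((a:ℤ)+1) ((b:ℤ)-1) ((c:ℤ)-1)
    + C * ((a:ℝ)+1) * cf g ((a:ℤ)+1) (b:ℤ) ((c:ℤ)-1)
    - (σ * (a:ℝ) + (b:ℝ) + (c:ℝ)) * cf g (a:ℤ) (b:ℤ) (c:ℤ)
    - ((b:ℝ)+1) * cf g ((a:ℤ)-1) ((b:ℤ)+1) ((c:ℤ)-1)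
    + Ra * ((b:ℝ)+1) * cf g (a:ℤ) ((b:ℤ)+1) (c:ℤ)
    + ((c:ℝ)+1) * cf g ((a:ℤ)-1) ((b:ℤ)-1) ((c:ℤ)+1) := by
  rw [gd_expand]
  simp only [coeff_add]
  rw [term1, term2, term3, term4, term5, term6, term7, term8]
  ring

end GDaux
namespace GDaux
variable (g : MvPolynomial (Fin 3) ℝ)

lemma sum_support3 (μ : Fin 3 →₀ ℕ) : (∑ i ∈ μ.support, μ i) = μ 0 + μ 1 + μ 2 := by
  rw [Finset.sum_subset (Finset.subset_univ μ.support)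
      (fun x _ hx => by simpa using (Finsupp.notMem_support_iff.mp hx))]
  rw [Fin.sum_univ_three]

lemma mu_eq_mono3 (μ : Fin 3 →₀ ℕ) : μ = mono3 (μ 0) (μ 1) (μ 2) := by
  ext j; fin_cases j
  · simpa using (mono3_apply0 (μ 0) (μ 1) (μ 2)).symm
  · simpa using (mono3_apply1 (μ 0) (μ 1) (μ 2)).symm
  · simpa using (mono3_apply2 (μ 0) (μ 1) (μ 2)).symm

lemma cf_level_gt {a b c : ℤ} (h : (g.totalDegree : ℤ) < a + b + c) : cf g a b c = 0 := by
  by_cases hn : 0 ≤ a ∧ 0 ≤ b ∧ 0 ≤ c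
  · rw [cf, if_pos hn]
    apply coeff_eq_zero_of_totalDegree_lt
    rw [sum_support3]
    rw [mono3_apply0, mono3_apply1, mono3_apply2]
    omega
  · exact cf_neg g (by omega)

theorem masterZ (A C σ Ra : ℝ) (hdeg : (gdDeriv A C σ Ra g).totalDegree ≤ 1)
    (a b c : ℤ) (h2 : 2 ≤ a + b + c) :
    A * ((a+1 : ℤ) : ℝ) * cf g (a+1) (b-1) (c-1)
    + C * ((a+1 : ℤ) : ℝ) * cf g (a+1) b (c-1)
    - (σ * ((a:ℤ):ℝ) + ((b:ℤ):ℝ) + ((c:ℤ):ℝ)) * cf g a b c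
    - ((b+1 : ℤ) : ℝ) * cf g (a-1) (b+1) (c-1)
    + Ra * ((b+1 : ℤ) : ℝ) * cf g a (b+1) c
    + ((c+1 : ℤ) : ℝ) * cf g (a-1) (b-1) (c+1) = 0 := by
  by_cases ha : 0 ≤ a
  · by_cases hb : 0 ≤ b
    · by_cases hc : 0 ≤ c
      · lift a to ℕ using ha
        lift b to ℕ using hb
        lift c to ℕ using hc
        have hz : coeff (mono3 a b c) (gdDeriv A C σ Ra g) = 0 := by
          apply coeff_eq_zero_of_totalDegree_lt
          rw [sum_support3, mono3_apply0, mono3_apply1, mono3_apply2]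
          omega
        have hm := master g A C σ Ra a b c
        rw [hz] at hm
        push_cast
        push_cast at hm
        linarith [hm]
      · -- c < 0
        push_neg at hc
        have k1 : cf g (a+1) (b-1) (c-1) = 0 := cf_neg g (by omega)
        have k2 : cf g (a+1) b (c-1) = 0 := cf_neg g (by omega)
        have k3 : cf g a b c = 0 := cf_neg g (by omega)
        have k4 : cf g (a-1) (b+1) (c-1) = 0 := cf_neg g (by omega)
        have k5 : cf g a (b+1) c = 0 := cf_neg g (by omega)
        rcases lt_or_eq_of_le (by omega : c + 1 ≤ 0) with h | h
        · have k6 : cf g (a-1) (b-1) (c+1) = 0 := cf_neg g (by omega)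
          rw [k1, k2, k3, k4, k5, k6]; ring
        · rw [k1, k2, k3, k4, k5, show ((c+1:ℤ):ℝ) = 0 by rw [h]; norm_num]; ring
    · push_neg at hb
      have k1 : cf g (a+1) (b-1) (c-1) = 0 := cf_neg g (by omega)
      have k2 : cf g (a+1) b (c-1) = 0 := cf_neg g (by omega)
      have k3 : cf g a b c = 0 := cf_neg g (by omega)
      have k6 : cf g (a-1) (b-1) (c+1) = 0 := cf_neg g (by omega)
      rcases lt_or_eq_of_le (by omega : b + 1 ≤ 0) with h | h
      · have k4 : cf g (a-1) (b+1) (c-1) = 0 := cf_neg g (by omega)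
        have k5 : cf g a (b+1) c = 0 := cf_neg g (by omega)
        rw [k1, k2, k3, k4, k5, k6]; ring
      · rw [k1, k2, k3, k6, show ((b+1:ℤ):ℝ) = 0 by rw [h]; norm_num]; ring
  · push_neg at ha
    have k3 : cf g a b c = 0 := cf_neg g (by omega)
    have k4 : cf g (a-1) (b+1) (c-1) = 0 := cf_neg g (by omega)
    have k5 : cf g a (b+1) c = 0 := cf_neg g (by omega)
    have k6 : cf g (a-1) (b-1) (c+1) = 0 := cf_neg g (by omega)
    rcases lt_or_eq_of_le (by omega : a + 1 ≤ 0) with h | h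
    · have k1 : cf g (a+1) (b-1) (c-1) = 0 := cf_neg g (by omega)
      have k2 : cf g (a+1) b (c-1) = 0 := cf_neg g (by omega)
      rw [k1, k2, k3, k4, k5, k6]; ring
    · rw [k3, k4, k5, k6, show ((a+1:ℤ):ℝ) = 0 by rw [h]; norm_num]; ring

end GDaux
namespace GDaux

lemma cf_congr (g : MvPolynomial (Fin 3) ℝ) {a b c a' b' c' : ℤ}
    (ha : a = a') (hb : b = b') (hc : c = c') : cf g a b c = cf g a' b' c' := by
  subst ha; subst hb; subst hc; rfl

section Main
variable (A C σ Ra : ℝ) (g : MvPolynomial (Fin 3) ℝ)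

lemma eqI (hdeg : (gdDeriv A C σ Ra g).totalDegree ≤ 1) (hd3 : 3 ≤ g.totalDegree)
    (a b c : ℤ) (hsum : a + b + c = (g.totalDegree : ℤ) + 1) :
    A * ((a+1:ℤ):ℝ) * cf g (a+1) (b-1) (c-1)
    - ((b+1:ℤ):ℝ) * cf g (a-1) (b+1) (c-1)
    + ((c+1:ℤ):ℝ) * cf g (a-1) (b-1) (c+1) = 0 := by
  have h := masterZ g A C σ Ra hdeg a b c (by omega)
  rw [cf_level_gt g (show (g.totalDegree:ℤ) < (a+1) + b + (c-1) by omega),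
      cf_level_gt g (show (g.totalDegree:ℤ) < a + b + c by omega),
      cf_level_gt g (show (g.totalDegree:ℤ) < a + (b+1) + c by omega)] at h
  linear_combination h

lemma eqII (hdeg : (gdDeriv A C σ Ra g).totalDegree ≤ 1) (hd3 : 3 ≤ g.totalDegree)
    (a b c : ℤ) (hsum : a + b + c = (g.totalDegree : ℤ)) :
    A * ((a+1:ℤ):ℝ) * cf g (a+1) (b-1) (c-1)
    + C * ((a+1:ℤ):ℝ) * cf g (a+1) b (c-1)
    - (σ * ((a:ℤ):ℝ) + ((b:ℤ):ℝ) + ((c:ℤ):ℝ)) * cf g a b c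
    - ((b+1:ℤ):ℝ) * cf g (a-1) (b+1) (c-1)
    + ((c+1:ℤ):ℝ) * cf g (a-1) (b-1) (c+1) = 0 := by
  have h := masterZ g A C σ Ra hdeg a b c (by omega)
  rw [cf_level_gt g (show (g.totalDegree:ℤ) < a + (b+1) + c by omega)] at h
  linear_combination h

variable (hA : 0 < A)
  (hdeg : (gdDeriv A C σ Ra g).totalDegree ≤ 1) (hd3 : 3 ≤ g.totalDegree)

include hA hdeg hd3 in
lemma oddx : ∀ t : ℕ, ∀ β γ : ℤ, (2*(t:ℤ)+1) + β + γ = (g.totalDegree : ℤ) →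
    cf g (2*(t:ℤ)+1) β γ = 0 := by
  intro t
  induction t with
  | zero =>
    intro β γ hs
    have h := eqI A C σ Ra g hdeg hd3 0 (β+1) (γ+1) (by push_cast at hs ⊢; omega)
    rw [show cf g (0-1) (β+1+1) (γ+1-1) = 0 from cf_neg g (by omega),
        show cf g (0-1) (β+1-1) (γ+1+1) = 0 from cf_neg g (by omega),
        show cf g (0+1) (β+1-1) (γ+1-1) = cf g (2*((0:ℕ):ℤ)+1) β γ from
          cf_congr g (by norm_num) (by ring) (by ring)] at h
    have h2 : A * cf g (2*((0:ℕ):ℤ)+1) β γ = 0 := by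
      have : ((0+1:ℤ):ℝ) = 1 := by norm_num
      rw [this] at h; linarith [h]
    rcases mul_eq_zero.mp h2 with h3 | h3
    · exact absurd h3 (ne_of_gt hA)
    · exact h3
  | succ t ih =>
    intro β γ hs
    have h := eqI A C σ Ra g hdeg hd3 (2*(t:ℤ)+2) (β+1) (γ+1) (by push_cast at hs ⊢; omega)
    rw [show cf g (2*(t:ℤ)+2-1) (β+1+1) (γ+1-1) = 0 from
          (cf_congr g (by ring) (by ring) (by ring)).trans
            (ih (β+2) γ (by push_cast at hs ⊢; omega)),
        show cf g (2*(t:ℤ)+2-1) (β+1-1) (γ+1+1) = 0 from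
          (cf_congr g (by ring) (by ring) (by ring)).trans
            (ih β (γ+2) (by push_cast at hs ⊢; omega)),
        show cf g (2*(t:ℤ)+2+1) (β+1-1) (γ+1-1) = cf g (2*((t+1:ℕ):ℤ)+1) β γ from
          cf_congr g (by push_cast; ring) (by ring) (by ring)] at h
    have h2 : A * (((2*(t:ℤ)+2+1 : ℤ)):ℝ) * cf g (2*((t+1:ℕ):ℤ)+1) β γ = 0 := by
      linarith [h]
    rcases mul_eq_zero.mp h2 with h3 | h3
    · rcases mul_eq_zero.mp h3 with h4 | h4
      · exact absurd h4 (ne_of_gt hA)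
      · exfalso; have : ((2*(t:ℤ)+3 : ℤ):ℝ) ≠ 0 := by positivity
        apply this; push_cast at h4 ⊢; linarith [h4]
    · exact h3

include hA hdeg hd3 in
lemma oddy : ∀ t : ℕ, ∀ α γ : ℤ, α + (2*(t:ℤ)+1) + γ = (g.totalDegree : ℤ) →
    cf g α (2*(t:ℤ)+1) γ = 0 := by
  intro t
  induction t with
  | zero =>
    intro α γ hs
    have h := eqI A C σ Ra g hdeg hd3 (α+1) 0 (γ+1) (by push_cast at hs ⊢; omega)
    rw [show cf g (α+1+1) (0-1) (γ+1-1) = 0 from cf_neg g (by omega),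
        show cf g (α+1-1) (0-1) (γ+1+1) = 0 from cf_neg g (by omega),
        show cf g (α+1-1) (0+1) (γ+1-1) = cf g α (2*((0:ℕ):ℤ)+1) γ from
          cf_congr g (by ring) (by norm_num) (by ring)] at h
    have h2 : ((0+1:ℤ):ℝ) * cf g α (2*((0:ℕ):ℤ)+1) γ = 0 := by linarith [h]
    rcases mul_eq_zero.mp h2 with h3 | h3
    · exfalso; norm_num at h3
    · exact h3
  | succ t ih =>
    intro α γ hs
    have h := eqI A C σ Ra g hdeg hd3 (α+1) (2*(t:ℤ)+2) (γ+1) (by push_cast at hs ⊢; omega)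
    rw [show cf g (α+1+1) (2*(t:ℤ)+2-1) (γ+1-1) = 0 from
          (cf_congr g (by ring) (by ring) (by ring)).trans
            (ih (α+2) γ (by push_cast at hs ⊢; omega)),
        show cf g (α+1-1) (2*(t:ℤ)+2-1) (γ+1+1) = 0 from
          (cf_congr g (by ring) (by ring) (by ring)).trans
            (ih α (γ+2) (by push_cast at hs ⊢; omega)),
        show cf g (α+1-1) (2*(t:ℤ)+2+1) (γ+1-1) = cf g α (2*((t+1:ℕ):ℤ)+1) γ from
          cf_congr g (by ring) (by push_cast; ring) (by ring)] at h
    have h2 : (((2*(t:ℤ)+2+1 : ℤ)):ℝ) * cf g α (2*((t+1:ℕ):ℤ)+1) γ = 0 := by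
      linarith [h]
    rcases mul_eq_zero.mp h2 with h3 | h3
    · exfalso; have : ((2*(t:ℤ)+3 : ℤ):ℝ) ≠ 0 := by positivity
      apply this; push_cast at h3 ⊢; linarith [h3]
    · exact h3

include hA hdeg hd3 in
lemma oddz : ∀ t : ℕ, ∀ α β : ℤ, α + β + (2*(t:ℤ)+1) = (g.totalDegree : ℤ) →
    cf g α β (2*(t:ℤ)+1) = 0 := by
  intro t
  induction t with
  | zero =>
    intro α β hs
    have h := eqI A C σ Ra g hdeg hd3 (α+1) (β+1) 0 (by push_cast at hs ⊢; omega)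
    rw [show cf g (α+1+1) (β+1-1) (0-1) = 0 from cf_neg g (by omega),
        show cf g (α+1-1) (β+1+1) (0-1) = 0 from cf_neg g (by omega),
        show cf g (α+1-1) (β+1-1) (0+1) = cf g α β (2*((0:ℕ):ℤ)+1) from
          cf_congr g (by ring) (by ring) (by norm_num)] at h
    have h2 : ((0+1:ℤ):ℝ) * cf g α β (2*((0:ℕ):ℤ)+1) = 0 := by linarith [h]
    rcases mul_eq_zero.mp h2 with h3 | h3
    · exfalso; norm_num at h3
    · exact h3
  | succ t ih =>
    intro α β hs
    have h := eqI A C σ Ra g hdeg hd3 (α+1) (β+1) (2*(t:ℤ)+2) (by push_cast at hs ⊢; omega)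
    rw [show cf g (α+1+1) (β+1-1) (2*(t:ℤ)+2-1) = 0 from
          (cf_congr g (by ring) (by ring) (by ring)).trans
            (ih (α+2) β (by push_cast at hs ⊢; omega)),
        show cf g (α+1-1) (β+1+1) (2*(t:ℤ)+2-1) = 0 from
          (cf_congr g (by ring) (by ring) (by ring)).trans
            (ih α (β+2) (by push_cast at hs ⊢; omega)),
        show cf g (α+1-1) (β+1-1) (2*(t:ℤ)+2+1) = cf g α β (2*((t+1:ℕ):ℤ)+1) from
          cf_congr g (by ring) (by ring) (by push_cast; ring)] at h
    have h2 : (((2*(t:ℤ)+2+1 : ℤ)):ℝ) * cf g α β (2*((t+1:ℕ):ℤ)+1) = 0 := by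
      linarith [h]
    rcases mul_eq_zero.mp h2 with h3 | h3
    · exfalso; have : ((2*(t:ℤ)+3 : ℤ):ℝ) ≠ 0 := by positivity
      apply this; push_cast at h3 ⊢; linarith [h3]
    · exact h3

end Main
end GDaux
namespace GDaux
section Main2
variable (A C σ Ra : ℝ) (g : MvPolynomial (Fin 3) ℝ)
variable (hA : 0 < A)
  (hdeg : (gdDeriv A C σ Ra g).totalDegree ≤ 1) (hd3 : 3 ≤ g.totalDegree)

include hdeg hd3 in
lemma Rz (i j l : ℤ) (hs : i + j + l = (g.totalDegree : ℤ) / 2)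
    (hm : (g.totalDegree : ℤ) = 2 * ((g.totalDegree : ℤ) / 2)) :
    ((j+1:ℤ):ℝ) * cf g (2*(i-1)) (2*(j+1)) (2*l)
      - ((l+1:ℤ):ℝ) * cf g (2*(i-1)) (2*j) (2*(l+1))
      = A * ((i:ℤ):ℝ) * cf g (2*i) (2*j) (2*l) := by
  have h := eqI A C σ Ra g hdeg hd3 (2*i-1) (2*j+1) (2*l+1) (by omega)
  rw [show cf g (2*i-1+1) (2*j+1-1) (2*l+1-1) = cf g (2*i) (2*j) (2*l) from
        cf_congr g (by ring) (by ring) (by ring),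
      show cf g (2*i-1-1) (2*j+1+1) (2*l+1-1) = cf g (2*(i-1)) (2*(j+1)) (2*l) from
        cf_congr g (by ring) (by ring) (by ring),
      show cf g (2*i-1-1) (2*j+1-1) (2*l+1+1) = cf g (2*(i-1)) (2*j) (2*(l+1)) from
        cf_congr g (by ring) (by ring) (by ring)] at h
  push_cast at h ⊢
  linarith [h]

include hA hdeg hd3 in
lemma Sz (i j l : ℤ) (hs : i + j + l = (g.totalDegree : ℤ) / 2)
    (hm : (g.totalDegree : ℤ) = 2 * ((g.totalDegree : ℤ) / 2)) :
    A * ((2*i+1:ℤ):ℝ) * cf g (2*i+1) (2*j-1) (2*l-1)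
    - ((2*j+1:ℤ):ℝ) * cf g (2*(i-1)+1) (2*j+1) (2*l-1)
    + ((2*l+1:ℤ):ℝ) * cf g (2*(i-1)+1) (2*j-1) (2*l+1)
    = 2*(σ * ((i:ℤ):ℝ) + ((j:ℤ):ℝ) + ((l:ℤ):ℝ)) * cf g (2*i) (2*j) (2*l) := by
  have h := eqII A C σ Ra g hdeg hd3 (2*i) (2*j) (2*l) (by omega)
  -- kill the C-term, whose x-index is odd
  have hodd : cf g (2*i+1) (2*j) (2*l-1) = 0 := by
    by_cases hi : 0 ≤ i
    · by_cases hjl : 0 ≤ j ∧ 1 ≤ l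
      · have := oddx A C σ Ra g hA hdeg hd3 i.toNat (2*j) (2*l-1)
          (by push_cast; omega)
        rw [show (2*(i.toNat:ℤ)+1) = 2*i+1 by omega] at this
        exact this
      · exact cf_neg g (by omega)
    · exact cf_neg g (by omega)
  rw [show cf g (2*i+1) (2*j) (2*l-1) = 0 from hodd,
      show cf g (2*i+1) (2*j-1) (2*l-1) = cf g (2*i+1) (2*j-1) (2*l-1) from rfl,
      show cf g (2*i-1) (2*j+1) (2*l-1) = cf g (2*(i-1)+1) (2*j+1) (2*l-1) from
        cf_congr g (by ring) (by ring) (by ring),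
      show cf g (2*i-1) (2*j-1) (2*l+1) = cf g (2*(i-1)+1) (2*j-1) (2*l+1) from
        cf_congr g (by ring) (by ring) (by ring)] at h
  push_cast at h ⊢
  linarith [h]

end Main2
end GDaux
namespace GDaux
section Main3
variable (A C σ Ra : ℝ) (g : MvPolynomial (Fin 3) ℝ)
variable (hA : 0 < A) (hσ : 0 < σ)
  (hdeg : (gdDeriv A C σ Ra g).totalDegree ≤ 1) (hd3 : 3 ≤ g.totalDegree)

include hA hσ hdeg hd3 in
lemma mainInd (m : ℕ) (hm : (g.totalDegree : ℤ) = 2*(m:ℤ)) (hm1 : 1 ≤ m) :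
    ∀ n : ℕ,
      (∀ i j l : ℤ, i+j+l = (m:ℤ) → (m:ℤ) - n < i → cf g (2*i) (2*j) (2*l) = 0)
      ∧ (∀ p q r : ℤ, p+q+r = (m:ℤ)-2 → (m:ℤ) - n ≤ p →
          cf g (2*p+1) (2*q+1) (2*r+1) = 0) := by
  have hm' : (g.totalDegree : ℤ) = 2*((g.totalDegree : ℤ)/2) := by omega
  have hdiv : (g.totalDegree : ℤ) / 2 = (m:ℤ) := by omega
  intro n
  induction n with
  | zero =>
    constructor
    · intro i j l hsum hi; exact cf_neg g (by omega)
    · intro p q r hsum hp; exact cf_neg g (by omega)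
  | succ n ih =>
    obtain ⟨Ha, Hb⟩ := ih
    by_cases hneg : (m:ℤ) - n < 0
    · constructor
      · intro i j l hsum hi
        by_cases hi0 : (m:ℤ) - n < i
        · exact Ha i j l hsum hi0
        · exact cf_neg g (by omega)
      · intro p q r hsum hp
        by_cases hp0 : (m:ℤ) - n ≤ p
        · exact Hb p q r hsum hp0
        · exact cf_neg g (by omega)
    · push_neg at hneg
      set i₀ : ℤ := (m:ℤ) - n with hi₀def
      have hi₀nn : 0 ≤ i₀ := hneg
      have hicast : (0:ℝ) ≤ ((i₀:ℤ):ℝ) := by exact_mod_cast hi₀nn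
      have hspos : 0 < σ * ((i₀:ℤ):ℝ) + (n:ℝ) := by
        rcases Nat.eq_zero_or_pos n with hn0 | hn1
        · have he : i₀ = (m:ℤ) := by omega
          have h2 : (1:ℝ) ≤ ((i₀:ℤ):ℝ) := by
            rw [he]; exact_mod_cast (by exact_mod_cast hm1 : (1:ℤ) ≤ (m:ℤ))
          have h3 : (0:ℝ) ≤ (n:ℝ) := by positivity
          nlinarith
        · have h2 : (1:ℝ) ≤ (n:ℝ) := by exact_mod_cast hn1
          nlinarith
      set γ : ℕ → ℝ := fun j => cf g (2*i₀) (2*(j:ℤ)) (2*((n:ℤ)-(j:ℤ))) with hγdef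
      -- constancy along the level i₀
      have hγfact : ∀ j : ℕ, j ≤ n →
          (Nat.factorial j : ℝ) * (Nat.factorial (n-j) : ℝ) * γ j
            = (Nat.factorial n : ℝ) * γ 0 := by
        intro j
        induction j with
        | zero => intro _; simp
        | succ j ihj =>
          intro hjn
          have hIH := ihj (by omega)
          have hrel := Rz A C σ Ra g hdeg hd3 (i₀+1) (j:ℤ) ((n:ℤ)-(j:ℤ)-1)
            (by omega) hm'
          have hup : cf g (2*(i₀+1)) (2*(j:ℤ)) (2*((n:ℤ)-(j:ℤ)-1)) = 0 :=
            Ha (i₀+1) (j:ℤ) ((n:ℤ)-(j:ℤ)-1) (by omega) (by omega)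
          rw [hup, mul_zero,
              show cf g (2*(i₀+1-1)) (2*((j:ℤ)+1)) (2*((n:ℤ)-(j:ℤ)-1))
                = γ (j+1) from cf_congr g (by ring) (by push_cast; ring)
                  (by push_cast; ring),
              show cf g (2*(i₀+1-1)) (2*(j:ℤ)) (2*((n:ℤ)-(j:ℤ)-1+1))
                = γ j from cf_congr g (by ring) (by ring) (by push_cast; ring)] at hrel
          have hrel2 : ((j:ℝ)+1) * γ (j+1) = ((n:ℝ)-(j:ℝ)) * γ j := by
            push_cast at hrel; linarith [hrel]
          have e1 : (Nat.factorial (j+1) : ℝ) = ((j:ℝ)+1) * (Nat.factorial j : ℝ) := by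
            rw [Nat.factorial_succ]; push_cast; ring
          have e2 : n - j = (n - (j+1)) + 1 := by omega
          have e3 : ((n - (j+1) : ℕ) : ℝ) = (n:ℝ) - (j:ℝ) - 1 := by
            have h4 : ((n - (j+1) : ℕ) : ℤ) = (n:ℤ) - (j:ℤ) - 1 := by omega
            have := congrArg (fun z : ℤ => (z : ℝ)) h4
            push_cast at this; linarith [this]
          have e4 : (Nat.factorial (n-j) : ℝ)
              = ((n:ℝ)-(j:ℝ)) * (Nat.factorial (n-(j+1)) : ℝ) := by
            rw [e2, Nat.factorial_succ]; push_cast [e3]; ring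
          rw [e1] at *
          rw [e4] at hIH
          linear_combination hIH
            + ((Nat.factorial j : ℝ) * (Nat.factorial (n-(j+1)) : ℝ)) * hrel2
      -- the kappa sequence
      have κclaim : ∀ j : ℕ, j + 1 ≤ n → ∃ t : ℝ, 0 < t ∧
          cf g (2*(i₀-1)+1) (2*(j:ℤ)+1) (2*((n:ℤ)-1-(j:ℤ))+1) = -t * γ 0 := by
        intro j
        induction j with
        | zero =>
          intro h1n
          have hS := Sz A C σ Ra g hA hdeg hd3 i₀ 0 (n:ℤ) (by omega) hm'
          rw [show cf g (2*i₀+1) (2*(0:ℤ)-1) (2*(n:ℤ)-1) = 0 from cf_neg g (by omega),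
              show cf g (2*(i₀-1)+1) (2*(0:ℤ)-1) (2*(n:ℤ)+1) = 0 from
                cf_neg g (by omega),
              show cf g (2*i₀) (2*(0:ℤ)) (2*(n:ℤ)) = γ 0 from
                cf_congr g rfl (by norm_num) (by push_cast; ring)] at hS
          refine ⟨2*(σ * ((i₀:ℤ):ℝ) + (n:ℝ)), by linarith, ?_⟩
          rw [show cf g (2*(i₀-1)+1) (2*((0:ℕ):ℤ)+1) (2*((n:ℤ)-1-((0:ℕ):ℤ))+1)
                = cf g (2*(i₀-1)+1) (2*(0:ℤ)+1) (2*(n:ℤ)-1) from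
              cf_congr g rfl (by norm_num) (by push_cast; ring)] at *
          push_cast at hS ⊢
          linear_combination (-1:ℝ) * hS
        | succ j ihj =>
          intro hj2n
          obtain ⟨t, ht, hκ⟩ := ihj (by omega)
          have hS := Sz A C σ Ra g hA hdeg hd3 i₀ ((j:ℤ)+1) ((n:ℤ)-(j:ℤ)-1)
            (by omega) hm'
          have hK0 : cf g (2*i₀+1) (2*((j:ℤ)+1)-1) (2*((n:ℤ)-(j:ℤ)-1)-1) = 0 := by
            rw [show cf g (2*i₀+1) (2*((j:ℤ)+1)-1) (2*((n:ℤ)-(j:ℤ)-1)-1)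
                  = cf g (2*i₀+1) (2*(j:ℤ)+1) (2*((n:ℤ)-(j:ℤ)-2)+1) from
                cf_congr g rfl (by ring) (by ring)]
            exact Hb i₀ (j:ℤ) ((n:ℤ)-(j:ℤ)-2) (by omega) (by omega)
          rw [hK0, mul_zero,
              show cf g (2*(i₀-1)+1) (2*((j:ℤ)+1)-1) (2*((n:ℤ)-(j:ℤ)-1)+1)
                = -t * γ 0 from (cf_congr g rfl (by ring) (by ring)).trans hκ,
              show cf g (2*i₀) (2*((j:ℤ)+1)) (2*((n:ℤ)-(j:ℤ)-1))
                = γ (j+1) from cf_congr g rfl (by push_cast; ring)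
                  (by push_cast; ring)] at hS
          -- express γ (j+1) via γ 0
          have hFp : (0:ℝ) < (Nat.factorial (j+1) : ℝ) * (Nat.factorial (n-(j+1)) : ℝ) := by
            have := Nat.factorial_pos (j+1)
            have := Nat.factorial_pos (n-(j+1))
            positivity
          have hγj1 : γ (j+1) = ((Nat.factorial n : ℝ) /
              ((Nat.factorial (j+1) : ℝ) * (Nat.factorial (n-(j+1)) : ℝ))) * γ 0 := by
            have h5 := hγfact (j+1) (by omega)
            field_simp
            linear_combination h5
          rw [hγj1] at hS
          set F : ℝ := (Nat.factorial n : ℝ) /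
              ((Nat.factorial (j+1) : ℝ) * (Nat.factorial (n-(j+1)) : ℝ)) with hFdef
          have hF : 0 < F := by
            rw [hFdef]
            have := Nat.factorial_pos n
            positivity
          have hnj : (0:ℝ) < 2*(n:ℝ) - 2*(j:ℝ) - 1 := by
            have : (j:ℝ) + 2 ≤ (n:ℝ) := by exact_mod_cast hj2n
            linarith
          refine ⟨((2*(n:ℝ)-2*(j:ℝ)-1)*t + 2*(σ * ((i₀:ℤ):ℝ) + (n:ℝ))*F)
              / (2*(j:ℝ)+3), ?_, ?_⟩
          · apply div_pos
            · nlinarith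
            · positivity
          · have h2j3 : (2*(j:ℝ)+3) ≠ 0 := by positivity
            rw [show cf g (2*(i₀-1)+1) (2*((j+1:ℕ):ℤ)+1) (2*((n:ℤ)-1-((j+1:ℕ):ℤ))+1)
                  = cf g (2*(i₀-1)+1) (2*((j:ℤ)+1)+1) (2*((n:ℤ)-(j:ℤ)-1)-1) from
                cf_congr g rfl (by push_cast; ring) (by push_cast; ring)]
            have h10 : cf g (2*(i₀-1)+1) (2*((j:ℤ)+1)+1) (2*((n:ℤ)-(j:ℤ)-1)-1)
                = (-((2*(n:ℝ)-2*(j:ℝ)-1)*t + 2*(σ * ((i₀:ℤ):ℝ) + (n:ℝ))*F) * γ 0)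
                  / (2*(j:ℝ)+3) := by
              rw [eq_div_iff h2j3]
              push_cast at hS ⊢
              linear_combination (-1:ℝ) * hS
            rw [h10]; ring
      -- gamma 0 vanishes
      have hγ0 : γ 0 = 0 := by
        rcases Nat.eq_zero_or_pos n with hn0 | hn1
        · have hS := Sz A C σ Ra g hA hdeg hd3 i₀ 0 0 (by omega) hm'
          rw [show cf g (2*i₀+1) (2*(0:ℤ)-1) (2*(0:ℤ)-1) = 0 from cf_neg g (by omega),
              show cf g (2*(i₀-1)+1) (2*(0:ℤ)+1) (2*(0:ℤ)-1) = 0 from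
                cf_neg g (by omega),
              show cf g (2*(i₀-1)+1) (2*(0:ℤ)-1) (2*(0:ℤ)+1) = 0 from
                cf_neg g (by omega),
              show cf g (2*i₀) (2*(0:ℤ)) (2*(0:ℤ)) = γ 0 from
                cf_congr g rfl (by norm_num) (by omega)] at hS
          have hi1 : (1:ℝ) ≤ ((i₀:ℤ):ℝ) := by
            have : (1:ℤ) ≤ i₀ := by omega
            exact_mod_cast this
          have h6 : (σ * ((i₀:ℤ):ℝ)) * γ 0 = 0 := by
            push_cast at hS
            linear_combination (-1/2 : ℝ) * hS
          rcases mul_eq_zero.mp h6 with h7 | h7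
          · exfalso; nlinarith
          · exact h7
        · obtain ⟨t, ht, hκ⟩ := κclaim (n-1) (by omega)
          have hS := Sz A C σ Ra g hA hdeg hd3 i₀ (n:ℤ) 0 (by omega) hm'
          rw [show cf g (2*i₀+1) (2*(n:ℤ)-1) (2*(0:ℤ)-1) = 0 from cf_neg g (by omega),
              show cf g (2*(i₀-1)+1) (2*(n:ℤ)+1) (2*(0:ℤ)-1) = 0 from
                cf_neg g (by omega),
              show cf g (2*(i₀-1)+1) (2*(n:ℤ)-1) (2*(0:ℤ)+1)
                  = -t * γ 0 from
                (cf_congr g rfl (by omega) (by omega)).trans hκ,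
              show cf g (2*i₀) (2*(n:ℤ)) (2*(0:ℤ)) = γ n from
                cf_congr g rfl rfl (by push_cast; ring)] at hS
          have hγn : γ n = γ 0 := by
            have h5 := hγfact n (by omega)
            have h6 : n - n = 0 := by omega
            rw [h6, Nat.factorial_zero] at h5
            have hfp : (0:ℝ) < (Nat.factorial n : ℝ) := by
              exact_mod_cast Nat.factorial_pos n
            have h7 : (Nat.factorial n : ℝ) * γ n = (Nat.factorial n : ℝ) * γ 0 := by
              push_cast at h5; linarith [h5]
            exact mul_left_cancel₀ (ne_of_gt hfp) h7
          rw [hγn] at hS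
          have h6 : (t + 2*(σ * ((i₀:ℤ):ℝ) + (n:ℝ))) * γ 0 = 0 := by
            push_cast at hS
            linear_combination (-1:ℝ) * hS
          rcases mul_eq_zero.mp h6 with h7 | h7
          · exfalso; linarith
          · exact h7
      constructor
      · intro i j l hsum hi
        by_cases hi0 : (m:ℤ) - n < i
        · exact Ha i j l hsum hi0
        · have hii : i = i₀ := by omega
          by_cases hjl : 0 ≤ j ∧ 0 ≤ l
          · have h8 : cf g (2*i) (2*j) (2*l) = γ j.toNat :=
              cf_congr g (by omega) (by omega) (by omega)
            rw [h8]
            have h5 := hγfact j.toNat (by omega)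
            rw [hγ0, mul_zero] at h5
            have hf1 : (0:ℝ) < (Nat.factorial j.toNat : ℝ) := by
              exact_mod_cast Nat.factorial_pos _
            have hf2 : (0:ℝ) < (Nat.factorial (n - j.toNat) : ℝ) := by
              exact_mod_cast Nat.factorial_pos _
            rcases mul_eq_zero.mp h5 with h7 | h7
            · exfalso; rcases mul_eq_zero.mp h7 with h9 | h9 <;> linarith
            · exact h7
          · exact cf_neg g (by omega)
      · intro p q r hsum hp
        by_cases hp0 : (m:ℤ) - n ≤ p
        · exact Hb p q r hsum hp0
        · have hpp : p = i₀ - 1 := by omega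
          by_cases hqr : 0 ≤ q ∧ 0 ≤ r
          · have hn1 : 1 ≤ n := by omega
            obtain ⟨t, ht, hκ⟩ := κclaim q.toNat (by omega)
            have h8 : cf g (2*p+1) (2*q+1) (2*r+1)
                = cf g (2*(i₀-1)+1) (2*(q.toNat:ℤ)+1) (2*((n:ℤ)-1-(q.toNat:ℤ))+1) :=
              cf_congr g (by omega) (by omega) (by omega)
            rw [h8, hκ, hγ0, mul_zero]
          · exact cf_neg g (by omega)

end Main3
end GDaux
namespace GDaux

lemma exists_top (g : MvPolynomial (Fin 3) ℝ) (hg : g ≠ 0) :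
    ∃ a b c : ℕ, a + b + c = g.totalDegree ∧ cf g (a:ℤ) (b:ℤ) (c:ℤ) ≠ 0 := by
  obtain ⟨μ, hμmem, hμ⟩ := Finset.exists_mem_eq_sup g.support
    (MvPolynomial.support_nonempty.mpr hg) (fun s => s.sum fun _ e => e)
  refine ⟨μ 0, μ 1, μ 2, ?_, ?_⟩
  · have h1 : g.totalDegree = μ.sum fun _ e => e := hμ
    have h2 : (μ.sum fun _ e => e) = ∑ i ∈ μ.support, μ i := rfl
    rw [h1, h2, sum_support3]
  · rw [cf_natcast]
    rw [← mu_eq_mono3]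
    exact MvPolynomial.mem_support_iff.mp hμmem

end GDaux

open GDaux in
/-- For positive parameters, if `X(g)` has degree at most 1, then `g`
has degree at most 2. -/
theorem gd_exponential_factor_degree_bound
    (A C σ Ra : ℝ) (hA : 0 < A) (hC : 0 < C) (hσ : 0 < σ) (hRa : 0 < Ra)
    (g : MvPolynomial (Fin 3) ℝ)
    (hdeg : (gdDeriv A C σ Ra g).totalDegree ≤ 1) :
    g.totalDegree ≤ 2 := by
  by_contra hcon
  push_neg at hcon
  have hd3 : 3 ≤ g.totalDegree := hcon
  have hg : g ≠ 0 := by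
    intro h
    rw [h, MvPolynomial.totalDegree_zero] at hd3
    omega
  obtain ⟨a, b, c, hsum, hne⟩ := exists_top g hg
  rcases Nat.even_or_odd a with ⟨i, hi⟩ | ⟨i, hi⟩
  · rcases Nat.even_or_odd b with ⟨j, hj⟩ | ⟨j, hj⟩
    · rcases Nat.even_or_odd c with ⟨l, hl⟩ | ⟨l, hl⟩
      · -- all even
        set m : ℕ := i + j + l with hmdef
        have hm : (g.totalDegree : ℤ) = 2*(m:ℤ) := by
          have : ((a+b+c : ℕ) : ℤ) = (g.totalDegree : ℤ) := by exact_mod_cast hsum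
          omega
        have hm1 : 1 ≤ m := by omega
        have h0 := (mainInd A C σ Ra g hA hσ hdeg hd3 m hm hm1 (m+1)).1
          (i:ℤ) (j:ℤ) (l:ℤ) (by omega) (by omega)
        apply hne
        rw [show ((a:ℤ)) = 2*(i:ℤ) by omega, show ((b:ℤ)) = 2*(j:ℤ) by omega,
            show ((c:ℤ)) = 2*(l:ℤ) by omega]
        exact h0
      · -- c odd
        apply hne
        have := oddz A C σ Ra g hA hdeg hd3 l (a:ℤ) (b:ℤ) (by omega)
        rw [show ((c:ℤ)) = 2*(l:ℤ)+1 by omega]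
        exact this
    · apply hne
      have := oddy A C σ Ra g hA hdeg hd3 j (a:ℤ) (c:ℤ) (by omega)
      rw [show ((b:ℤ)) = 2*(j:ℤ)+1 by omega]
      exact this
  · apply hne
    have := oddx A C σ Ra g hA hdeg hd3 i (b:ℤ) (c:ℤ) (by omega)
    rw [show ((a:ℤ)) = 2*(i:ℤ)+1 by omega]
    exact this
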